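/- Let A be a self-adjoint operator on a Hilbert space, H self-adjoint with bounded commutator in the following sense: there is a bounded operator T such that ⟨Hf, Ag⟩ − ⟨Af, Hg⟩ = ⟨f, Tg⟩ for all f, g ∈ D(H) ∩ D(A), and suppose (H ± i)^{−1} maps a core D₀ of A into D(A). Then for z = ±i, the commutator identity [(H−z)^{−1}, A]f = (H−z)^{−1} T (H−z)^{−1} f (up to a factor) holds for f ∈ D₀, and in particular [(H−z)^{−1}, A] extends to a bounded operator on the Hilbert space with norm at most ‖T‖·‖(H−z)^{−1}‖². -/

import Mathlib

open scoped ComplexInnerProductSpace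

private theorem aux_symm {E : Type*} [NormedAddCommGroup E] [InnerProductSpace ℂ E]
    [CompleteSpace E] {B : E →ₗ.[ℂ] E} (hB : IsSelfAdjoint B) (x y : B.domain) :
    ⟪B x, (y : E)⟫ = ⟪(x : E), B y⟫ := by
  have hd : Dense (B.domain : Set E) := hB.dense_domain
  have hBB : B.adjoint = B := hB
  obtain ⟨hdom, happ⟩ := LinearPMap.ext_iff.mp hBB
  have hx' : (x : E) ∈ B.adjoint.domain := by rw [hdom]; exact x.2
  have h := LinearPMap.adjoint_isFormalAdjoint hd ⟨(x : E), hx'⟩ y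
  rwa [happ (x := (x : E)) (hf := hx') (hg := x.2)] at h

private theorem aux_mem {E : Type*} [NormedAddCommGroup E] [InnerProductSpace ℂ E]
    [CompleteSpace E] {B : E →ₗ.[ℂ] E} (hB : IsSelfAdjoint B) {y w : E}
    (h : ∀ x : B.domain, ⟪w, (x : E)⟫ = ⟪y, B x⟫) :
    ∃ hm : y ∈ B.domain, B ⟨y, hm⟩ = w := by
  have hd : Dense (B.domain : Set E) := hB.dense_domain
  have hmem : y ∈ B.adjoint.domain := LinearPMap.mem_adjoint_domain_of_exists y ⟨w, h⟩
  have happly : B.adjoint ⟨y, hmem⟩ = w := LinearPMap.adjoint_apply_eq hd ⟨y, hmem⟩ h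
  have hBB : B.adjoint = B := hB
  obtain ⟨hdom, happ⟩ := LinearPMap.ext_iff.mp hBB
  refine ⟨hdom ▸ hmem, ?_⟩
  rw [← happ (x := y) (hf := hmem) (hg := hdom ▸ hmem)]
  exact happly

/-- if the commutator form of `H` and `A` is given by a bounded
operator `T` on `D(H) ∩ D(A)`, and the resolvent `R = (H−z)⁻¹` (`z = ±i`) maps
a dense subspace `D₀ ⊆ D(A)` into `D(A)`, then on `D₀` the commutator
`[R, A] = A R − R A` equals `R T R` and hence extends to a bounded operator of
norm at most `‖T‖ ‖R‖²`. -/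
theorem stmt15 {E : Type*} [NormedAddCommGroup E] [InnerProductSpace ℂ E]
    [CompleteSpace E]
    (Hop Aop : E →ₗ.[ℂ] E) (hH : IsSelfAdjoint Hop) (hA : IsSelfAdjoint Aop)
    (T : E →L[ℂ] E)
    (hform : ∀ (f g : E) (hfH : f ∈ Hop.domain) (hfA : f ∈ Aop.domain)
      (hgH : g ∈ Hop.domain) (hgA : g ∈ Aop.domain),
      ⟪Hop ⟨f, hfH⟩, Aop ⟨g, hgA⟩⟫ - ⟪Aop ⟨f, hfA⟩, Hop ⟨g, hgH⟩⟫ = ⟪f, T g⟫)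
    (z : ℂ) (hz : z = Complex.I ∨ z = -Complex.I)
    (R : E →L[ℂ] E)
    (hR : ∀ f : E, ∃ hmem : R f ∈ Hop.domain, Hop ⟨R f, hmem⟩ - z • R f = f)
    (D₀ : Submodule ℂ E) (hD₀A : (D₀ : Set E) ⊆ Aop.domain)
    (hD₀dense : Dense (D₀ : Set E))
    (hRD : ∀ f ∈ D₀, R f ∈ Aop.domain) :
    ∃ K : E →L[ℂ] E, ‖K‖ ≤ ‖T‖ * ‖R‖ ^ 2 ∧
      ∀ f (hf : f ∈ D₀),
        K f = Aop ⟨R f, hRD f hf⟩ - R (Aop ⟨f, hD₀A hf⟩) ∧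
        K f = R (T (R f)) := by
  have hzc : (starRingEnd ℂ) z = -z := by
    rcases hz with h | h <;> simp [h, Complex.conj_I]
  have hz0 : (2 : ℂ) * z ≠ 0 := by
    rcases hz with h | h <;> simp [h, Complex.I_ne_zero]
  have hsymH := aux_symm hH
  have hsymA := aux_symm hA
  set R' := ContinuousLinearMap.adjoint R with hR'def
  -- R is a left inverse of (H - z)
  have hLinv : ∀ (u : E) (hu : u ∈ Hop.domain), R (Hop ⟨u, hu⟩ - z • u) = u := by
    intro u hu
    obtain ⟨hm, hRw⟩ := hR (Hop ⟨u, hu⟩ - z • u)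
    set w := Hop ⟨u, hu⟩ - z • u with hw
    have hd : R w - u ∈ Hop.domain := Submodule.sub_mem _ hm hu
    have hdval : Hop ⟨R w - u, hd⟩ = z • (R w - u) := by
      have hmk : (⟨R w - u, hd⟩ : Hop.domain) = ⟨R w, hm⟩ - ⟨u, hu⟩ := rfl
      rw [hmk, LinearPMap.map_sub, sub_eq_iff_eq_add.mp hRw, hw, smul_sub]
      abel
    have hinner : ⟪Hop ⟨R w - u, hd⟩, R w - u⟫ = ⟪R w - u, Hop ⟨R w - u, hd⟩⟫ :=
      hsymH ⟨R w - u, hd⟩ ⟨R w - u, hd⟩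
    rw [hdval, inner_smul_left, inner_smul_right, hzc] at hinner
    have h2 : (2 * z) * ⟪R w - u, R w - u⟫ = 0 := by linear_combination -hinner
    have hdd : R w - u = 0 := by
      rcases mul_eq_zero.mp h2 with h | h
      · exact absurd h hz0
      · exact inner_self_eq_zero.mp h
    exact sub_eq_zero.mp hdd
  -- R' is the resolvent at -z
  have hR'res : ∀ w : E, ∃ hm : R' w ∈ Hop.domain,
      Hop ⟨R' w, hm⟩ = w - z • R' w := by
    intro w
    refine aux_mem hH (y := R' w) ?_
    intro x
    have h1 : R (Hop x) = (x : E) + z • R (x : E) := by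
      have h0 := hLinv (x : E) x.2
      rw [map_sub, map_smul] at h0
      exact sub_eq_iff_eq_add.mp h0
    calc ⟪w - z • R' w, (x : E)⟫
        = ⟪w, (x : E)⟫ + z * ⟪R' w, (x : E)⟫ := by
          rw [inner_sub_left, inner_smul_left, hzc]; ring
      _ = ⟪w, (x : E)⟫ + z * ⟪w, R (x : E)⟫ := by
          rw [ContinuousLinearMap.adjoint_inner_left]
      _ = ⟪w, (x : E) + z • R (x : E)⟫ := by
          rw [inner_add_right, inner_smul_right]
      _ = ⟪w, R (Hop x)⟫ := by rw [h1]
      _ = ⟪R' w, Hop x⟫ := (ContinuousLinearMap.adjoint_inner_left R (Hop x) w).symm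
  -- the candidate operator
  refine ⟨R.comp (T.comp R), ?_, ?_⟩
  · calc ‖R.comp (T.comp R)‖ ≤ ‖R‖ * ‖T.comp R‖ := ContinuousLinearMap.opNorm_comp_le _ _
      _ ≤ ‖R‖ * (‖T‖ * ‖R‖) :=
          mul_le_mul_of_nonneg_left (ContinuousLinearMap.opNorm_comp_le _ _) (norm_nonneg _)
      _ = ‖T‖ * ‖R‖ ^ 2 := by ring
  intro g hg
  set β := Aop ⟨R g, hRD g hg⟩ with hβdef
  set a := Aop ⟨g, hD₀A hg⟩ with hadef
  set t := T (R g) with htdef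
  set y₀ := a + t + (2 * z) • β with hy₀def
  obtain ⟨hmg, hg1⟩ := hR g
  have hg2 : Hop ⟨R g, hmg⟩ = g + z • R g := sub_eq_iff_eq_add.mp hg1
  -- the key orthogonality relation on D₀
  have hC1 : ∀ f ∈ D₀, ⟪f, β - R' y₀⟫ = 0 := by
    intro f hf
    obtain ⟨hmf, hf1⟩ := hR f
    have hf2 : Hop ⟨R f, hmf⟩ = f + z • R f := sub_eq_iff_eq_add.mp hf1
    have hform' := hform (R f) (R g) hmf (hRD f hf) hmg (hRD g hg)
    rw [hf2, hg2, inner_add_left, inner_smul_left, hzc, inner_add_right,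
      inner_smul_right] at hform'
    have hs1 : ⟪Aop ⟨R f, hRD f hf⟩, g⟫ = ⟪R f, a⟫ :=
      hsymA ⟨R f, hRD f hf⟩ ⟨g, hD₀A hg⟩
    have hs2 : ⟪Aop ⟨R f, hRD f hf⟩, R g⟫ = ⟪R f, β⟫ :=
      hsymA ⟨R f, hRD f hf⟩ ⟨R g, hRD g hg⟩
    have ha1 : ⟪f, R' a⟫ = ⟪R f, a⟫ := ContinuousLinearMap.adjoint_inner_right R f a
    have ha2 : ⟪f, R' t⟫ = ⟪R f, t⟫ := ContinuousLinearMap.adjoint_inner_right R f t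
    have ha3 : ⟪f, R' β⟫ = ⟪R f, β⟫ := ContinuousLinearMap.adjoint_inner_right R f β
    rw [hy₀def, inner_sub_right, map_add, map_add, map_smul, inner_add_right,
      inner_add_right, inner_smul_right, ha1, ha2, ha3]
    linear_combination hform' + hs1 + z * hs2
  have hX : β - R' y₀ = 0 := by
    refine hD₀dense.eq_zero_of_inner_left ℂ fun v hv => ?_
    rw [← inner_eq_zero_symm]
    exact hC1 v hv
  have hβ : β = R' y₀ := sub_eq_zero.mp hX
  obtain ⟨hm', heq'⟩ := hR'res y₀
  have h5 := hLinv (R' y₀) hm'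
  rw [heq'] at h5
  have harg : y₀ - z • R' y₀ - z • R' y₀ = a + t := by
    rw [← hβ, hy₀def, two_mul, add_smul]
    abel
  rw [harg, map_add] at h5
  -- h5 : R a + R t = R' y₀
  have hmain : β = R a + R t := by rw [hβ, ← h5]
  constructor
  · show R (T (R g)) = β - R a
    rw [← htdef, hmain]
    abel
  · show R (T (R g)) = R t
    rw [htdef]
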